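/- Let C be a finite set of vectors in ℝ^N. Let (x_n) be a sequence of points in ℝ^N_{>0} with x_n → z as n → ∞, where z lies on the boundary of ℝ^N_{≥0}. Let U = { i ∈ {1,…,N} : z_i = 0 }. Suppose that C is partitioned along (x_n) with tiers T_1, …, T_P. Then there exists a non-negative conservation relation w ∈ ℝ^N_{≥0} that respects the pair (U, {T_i}): that is, w_i > 0 if and only if i ∈ U, and w · (y_j − y_ℓ) = 0 whenever y_j and y_ℓ lie in the same tier T_i. -/

import Mathlib

open Filter

/-- `vpow x v = ∏ i, (x i) ^ (v i)` (real exponents, with the convention `0^0 = 1`). -/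
noncomputable def vpow {N : ℕ} (x v : Fin N → ℝ) : ℝ := ∏ i, x i ^ v i

/-- The finite set of vectors `C ⊆ ℝ^N` is partitioned along the sequence `x` into the
ordered tiers `T 0 ≻ T 1 ≻ ⋯ ≻ T (P-1)` with constant `M > 1`. -/
def PartitionedAlong {N P : ℕ} (C : Finset (Fin N → ℝ)) (x : ℕ → Fin N → ℝ)
    (T : Fin P → Set (Fin N → ℝ)) (M : ℝ) : Prop :=
  1 < M ∧
  (∀ i, (T i).Nonempty) ∧
  (∀ i j, i ≠ j → Disjoint (T i) (T j)) ∧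
  (⋃ i, T i) = (C : Set (Fin N → ℝ)) ∧
  (∀ i : Fin P, ∀ yj ∈ T i, ∀ yk ∈ T i, ∀ n : ℕ,
    1 / M ≤ vpow (x n) (yk - yj) ∧ vpow (x n) (yk - yj) ≤ M) ∧
  (∀ i j : Fin P, i < j → ∀ yk ∈ T i, ∀ yj ∈ T j,
    Tendsto (fun n => vpow (x n) yk / vpow (x n) yj) atTop atTop)

/-- If a sequence of strictly positive points converges to a boundary point `z` of the
nonnegative orthant, and the finite set of vectors `C` is partitioned along the sequence
with tiers `T`, then there is a nonnegative conservation relation `w` that respects the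
pair `(U, {T i})`, where `U = {i : z i = 0}`: the support of `w` is exactly `U`, and
`w · (y_j − y_ℓ) = 0` whenever `y_j` and `y_ℓ` lie in the same tier. -/
theorem stmt_2 {N P : ℕ} (C : Finset (Fin N → ℝ)) (x : ℕ → Fin N → ℝ)
    (hx : ∀ n i, 0 < x n i)
    (z : Fin N → ℝ) (hz : ∀ i, 0 ≤ z i) (hzb : ∃ i, z i = 0)
    (hconv : Tendsto x atTop (nhds z))
    (T : Fin P → Set (Fin N → ℝ)) (M : ℝ)
    (hpart : PartitionedAlong C x T M) :
    ∃ w : Fin N → ℝ, (∀ i, 0 ≤ w i) ∧ (∀ i, 0 < w i ↔ z i = 0) ∧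
      ∀ i : Fin P, ∀ yj ∈ T i, ∀ yl ∈ T i, (∑ k, w k * (yj k - yl k)) = 0 := by
  classical
  obtain ⟨hM, hTne, hTdisj, hTcup, hTsame, hTdiff⟩ := hpart
  have hM0 : (0:ℝ) < M := lt_trans one_pos hM
  have hxi : ∀ i, Tendsto (fun n => x n i) atTop (nhds (z i)) :=
    fun i => (tendsto_pi_nhds.mp hconv) i
  have hlogv : ∀ (n : ℕ) (v : Fin N → ℝ),
      Real.log (vpow (x n) v) = ∑ i, v i * Real.log (x n i) := by
    intro n v
    unfold vpow
    rw [Real.log_prod (fun i _ => (Real.rpow_pos_of_pos (hx n i) _).ne')]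
    exact Finset.sum_congr rfl fun i _ => Real.log_rpow (hx n i) _
  set D : Set (Fin N → ℝ) :=
    {v | ∃ p : Fin P, ∃ yj yl, yj ∈ T p ∧ yl ∈ T p ∧
      v = fun k => if z k = 0 then yj k - yl k else 0} with hD
  set g : ℕ → (Fin N → ℝ) → ℝ := fun n v => ∑ i, Real.log (x n i) * v i with hg
  -- boundedness of g on the span of D
  have hbdd : ∀ v ∈ Submodule.span ℝ D, ∃ B : ℝ, ∀ᶠ n in atTop, |g n v| ≤ B := by
    intro v hv
    induction hv using Submodule.span_induction with
    | mem d hd =>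
      obtain ⟨p, yj, yl, hyj, hyl, rfl⟩ := hd
      have hsplit : ∀ n, g n (fun k => if z k = 0 then yj k - yl k else 0)
          = (∑ k, (yj k - yl k) * Real.log (x n k))
            - ∑ k, (if z k = 0 then 0 else Real.log (x n k) * (yj k - yl k)) := by
        intro n
        rw [hg]
        simp only
        rw [← Finset.sum_sub_distrib]
        refine Finset.sum_congr rfl fun k _ => ?_
        by_cases h : z k = 0 <;> simp [h, mul_comm]
      have h1 : ∀ n, |∑ k, (yj k - yl k) * Real.log (x n k)| ≤ Real.log M := by
        intro n
        have hb := hTsame p yl hyl yj hyj n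
        have hv0 : (0:ℝ) < vpow (x n) (yj - yl) := by
          unfold vpow
          exact Finset.prod_pos fun i _ => Real.rpow_pos_of_pos (hx n i) _
        have hle : Real.log (vpow (x n) (yj - yl)) ≤ Real.log M :=
          Real.log_le_log hv0 hb.2
        have hge : -Real.log M ≤ Real.log (vpow (x n) (yj - yl)) := by
          have h' : Real.log (1 / M) ≤ Real.log (vpow (x n) (yj - yl)) :=
            Real.log_le_log (by positivity) hb.1
          rwa [one_div, Real.log_inv] at h'
        have heq : Real.log (vpow (x n) (yj - yl)) = ∑ k, (yj k - yl k) * Real.log (x n k) := by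
          rw [hlogv n (yj - yl)]
          exact Finset.sum_congr rfl fun k _ => by simp
        rw [heq] at hle hge
        exact abs_le.mpr ⟨hge, hle⟩
      set c : ℝ := ∑ k, (if z k = 0 then 0 else Real.log (z k) * (yj k - yl k)) with hc
      have h2 : Tendsto (fun n => ∑ k, (if z k = 0 then 0 else Real.log (x n k) * (yj k - yl k)))
          atTop (nhds c) := by
        rw [hc]
        refine tendsto_finset_sum _ fun k _ => ?_
        by_cases h : z k = 0
        · simp only [if_pos h]; exact tendsto_const_nhds
        · simp only [if_neg h]
          exact (((Real.continuousAt_log h).tendsto).comp (hxi k)).mul_const _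
      have h2' : ∀ᶠ n in atTop,
          |∑ k, (if z k = 0 then 0 else Real.log (x n k) * (yj k - yl k))| < |c| + 1 :=
        (h2.abs).eventually_lt_const (lt_add_one _)
      refine ⟨Real.log M + (|c| + 1), ?_⟩
      filter_upwards [h2'] with n hn
      rw [hsplit n]
      refine (abs_sub _ _).trans ?_
      exact add_le_add (h1 n) hn.le
    | zero => exact ⟨0, Eventually.of_forall fun n => by simp [hg]⟩
    | add u v hu hv ihu ihv =>
      obtain ⟨B1, h1⟩ := ihu
      obtain ⟨B2, h2⟩ := ihv
      refine ⟨B1 + B2, ?_⟩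
      filter_upwards [h1, h2] with n ha hb
      have : g n (u + v) = g n u + g n v := by
        simp [hg, mul_add, Finset.sum_add_distrib]
      rw [this]
      exact (abs_add_le _ _).trans (add_le_add ha hb)
    | smul a u hu ihu =>
      obtain ⟨B, hB⟩ := ihu
      refine ⟨|a| * B, ?_⟩
      filter_upwards [hB] with n hn
      have : g n (a • u) = a * g n u := by
        simp [hg, Finset.mul_sum]
        exact Finset.sum_congr rfl fun k _ => by ring
      rw [this, abs_mul]
      exact mul_le_mul_of_nonneg_left hn (abs_nonneg a)
  set V : Submodule ℝ (Fin N → ℝ) := Submodule.span ℝ D with hV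
  set K : Set (Fin N → ℝ) :=
    convexHull ℝ ((fun k : Fin N => Pi.single k (1:ℝ)) '' {k | z k = 0}) with hK
  set A : Set (Fin N → ℝ) :=
    {v | (∀ k, 0 ≤ v k) ∧ (∀ k, z k ≠ 0 → v k = 0) ∧ ∑ k, v k = 1} with hA
  have hAconv : Convex ℝ A := by
    rintro u ⟨hu1, hu2, hu3⟩ v ⟨hv1, hv2, hv3⟩ a b ha hb hab
    refine ⟨fun k => ?_, fun k hk => ?_, ?_⟩
    · have := add_nonneg (mul_nonneg ha (hu1 k)) (mul_nonneg hb (hv1 k))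
      simpa using this
    · simp [hu2 k hk, hv2 k hk]
    · simp only [Pi.add_apply, Pi.smul_apply, smul_eq_mul]
      rw [Finset.sum_add_distrib, ← Finset.mul_sum, ← Finset.mul_sum, hu3, hv3]
      simpa using hab
  have hgen : ((fun k : Fin N => Pi.single k (1:ℝ)) '' {k | z k = 0}) ⊆ A := by
    rintro _ ⟨k, hk, rfl⟩
    refine ⟨fun j => ?_, fun j hj => ?_, ?_⟩
    · by_cases h : j = k
      · subst h; simp
      · simp [Pi.single_eq_of_ne h]
    · have : j ≠ k := fun h => hj (h ▸ hk)
      simp [Pi.single_eq_of_ne this]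
    · simp [Finset.sum_pi_single']
  have hKA : K ⊆ A := convexHull_min hgen hAconv
  -- log → -infty on the zero coordinates
  have hlog0 : ∀ k, z k = 0 → Tendsto (fun n => Real.log (x n k)) atTop atBot := by
    intro k hk
    have h0 : Tendsto (fun n => x n k) atTop (nhdsWithin 0 (Set.Ioi 0)) :=
      tendsto_nhdsWithin_of_tendsto_nhds_of_eventually_within _ (hk ▸ hxi k)
        (Eventually.of_forall fun n => hx n k)
    exact Real.tendsto_log_nhdsGT_zero.comp h0
  have hdisj : Disjoint K (V : Set (Fin N → ℝ)) := by
    rw [Set.disjoint_left]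
    intro v hvK hvV
    obtain ⟨hv1, hv2, hv3⟩ := hKA hvK
    obtain ⟨B, hB⟩ := hbdd v hvV
    have hk0 : ∃ k0, 0 < v k0 := by
      by_contra h
      push_neg at h
      have : ∑ k, v k = 0 :=
        le_antisymm (Finset.sum_nonpos fun k _ => h k) (Finset.sum_nonneg fun k _ => hv1 k)
      rw [hv3] at this
      exact one_ne_zero this
    obtain ⟨k0, hk0⟩ := hk0
    have hzk0 : z k0 = 0 := by
      by_contra h
      exact hk0.ne' (hv2 k0 h)
    have heve : ∀ᶠ n in atTop, ∀ k, z k = 0 → Real.log (x n k) ≤ 0 := by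
      rw [eventually_all]
      intro k
      by_cases hk : z k = 0
      · filter_upwards [(hlog0 k hk).eventually (eventually_le_atBot 0)] with n hn _
        exact hn
      · exact Eventually.of_forall fun n h => absurd h hk
    have hle : ∀ᶠ n in atTop, g n v ≤ v k0 * Real.log (x n k0) := by
      filter_upwards [heve] with n hn
      have hterm : ∀ k ∈ Finset.univ,
          Real.log (x n k) * v k ≤ (if k = k0 then v k0 * Real.log (x n k0) else 0) := by
        intro k _
        by_cases h : k = k0
        · subst h; simp [mul_comm]
        · rw [if_neg h]
          by_cases hzk : z k = 0
          · exact mul_nonpos_of_nonpos_of_nonneg (hn k hzk) (hv1 k)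
          · simp [hv2 k hzk]
      calc g n v ≤ ∑ k, (if k = k0 then v k0 * Real.log (x n k0) else 0) :=
            Finset.sum_le_sum hterm
        _ = v k0 * Real.log (x n k0) := by simp
    have hbot : Tendsto (fun n => v k0 * Real.log (x n k0)) atTop atBot :=
      (hlog0 k0 hzk0).const_mul_atBot hk0
    have htot : Tendsto (fun n => g n v) atTop atBot := tendsto_atBot_mono' atTop hle hbot
    obtain ⟨n, h1, h2⟩ := ((htot.eventually (eventually_le_atBot (-(|B| + 1)))).and hB).exists
    have h3 := (abs_le.mp h2).1
    have h4 := le_abs_self B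
    linarith
  have hVclosed : IsClosed (V : Set (Fin N → ℝ)) := Submodule.closed_of_finiteDimensional V
  have hKcomp : IsCompact K :=
    Set.Finite.isCompact_convexHull (𝕜 := ℝ) ((Set.toFinite _).image _)
  obtain ⟨f, s, t, hfs, hst, hft⟩ :=
    geometric_hahn_banach_compact_closed (convex_convexHull ℝ _) hKcomp
      (V.convex) hVclosed hdisj
  have ht0 : t < 0 := by
    have := hft 0 V.zero_mem
    simpa using this
  have hf0 : ∀ b ∈ V, f b = 0 := by
    intro b hb
    by_contra h
    have h1 := hft (((t - 1) / f b) • b) (V.smul_mem _ hb)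
    rw [map_smul, smul_eq_mul, div_mul_cancel₀ _ h] at h1
    linarith
  have hfneg : ∀ k, z k = 0 → f (Pi.single k 1) < 0 := by
    intro k hk
    have hmem : Pi.single k (1:ℝ) ∈ K :=
      subset_convexHull ℝ _ ⟨k, hk, rfl⟩
    exact lt_trans (hfs _ hmem) (lt_trans hst ht0)
  refine ⟨fun k => if z k = 0 then -f (Pi.single k 1) else 0, fun k => ?_, fun k => ?_, ?_⟩
  · by_cases h : z k = 0
    · simp only [if_pos h]
      linarith [hfneg k h]
    · simp [h]
  · constructor
    · intro hpos
      by_contra h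
      simp [h] at hpos
    · intro h
      simp only [if_pos h]
      linarith [hfneg k h]
  · intro p yj hyj yl hyl
    have hd : (fun k => if z k = 0 then yj k - yl k else 0) ∈ V :=
      Submodule.subset_span ⟨p, yj, yl, hyj, hyl, rfl⟩
    have hfd := hf0 _ hd
    have hrep : ∀ v : Fin N → ℝ, f v = ∑ k, v k * f (Pi.single k 1) := by
      intro v
      conv_lhs => rw [← Finset.univ_sum_single v]
      rw [map_sum]
      refine Finset.sum_congr rfl fun k _ => ?_
      have hsingle : (Pi.single k (v k) : Fin N → ℝ) = v k • (Pi.single k (1:ℝ) : Fin N → ℝ) := by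
        ext j
        by_cases h : j = k
        · subst h; simp
        · simp [Pi.single_eq_of_ne h]
      rw [hsingle, map_smul, smul_eq_mul]
    rw [hrep] at hfd
    calc ∑ k, (if z k = 0 then -f (Pi.single k 1) else 0) * (yj k - yl k)
        = -∑ k, (if z k = 0 then yj k - yl k else 0) * f (Pi.single k 1) := by
          rw [← Finset.sum_neg_distrib]
          refine Finset.sum_congr rfl fun k _ => ?_
          by_cases h : z k = 0 <;> simp [h] <;> ring
      _ = 0 := by rw [hfd, neg_zero]
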